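/- For any two quantum states ρ and σ on a finite-dimensional Hilbert space, the trace distance between ρ and σ is at least the trace distance between their ordered eigenvalue spectra, i.e., (1/2)‖ρ−σ‖₁ ≥ (1/2)Σᵢ|λᵢ(ρ)−λᵢ(σ)| where λᵢ denotes eigenvalues sorted in decreasing order. -/

import Mathlib

open Matrix Kronecker ComplexOrder

noncomputable section

variable {n : Type*} [Fintype n] [DecidableEq n]

/-- The positive semidefinite square root of a positive semidefinite matrix
(as `Matrix.PosSemidef.sqrt` was defined in Mathlib, Dec 2024; since removed). -/
def Matrix.PosSemidef.sqrt {𝕜 : Type*} [RCLike 𝕜] {A : Matrix n n 𝕜} (hA : A.PosSemidef) :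
    Matrix n n 𝕜 :=
  hA.1.eigenvectorUnitary.1 * diagonal ((↑) ∘ Real.sqrt ∘ hA.1.eigenvalues) *
    (star hA.1.eigenvectorUnitary : Matrix n n 𝕜)

open Classical in
/-- The square root of a matrix: the PSD square root if the matrix is PSD, else 0. -/
def msqrt (A : Matrix n n ℂ) : Matrix n n ℂ :=
  if h : A.PosSemidef then h.sqrt else 0

/-- The trace norm (Schatten 1-norm) of a matrix. -/
def trNorm (A : Matrix n n ℂ) : ℝ :=
  ((Matrix.posSemidef_conjTranspose_mul_self A).sqrt.trace).re

/-- The operator norm of a matrix, acting on the Euclidean space. -/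
def opNorm (A : Matrix n n ℂ) : ℝ :=
  ‖(Matrix.toEuclideanCLM (𝕜 := ℂ) A : EuclideanSpace ℂ n →L[ℂ] EuclideanSpace ℂ n)‖

/-- A (normalized) quantum state: positive semidefinite with unit trace. -/
def IsState (ρ : Matrix n n ℂ) : Prop := ρ.PosSemidef ∧ ρ.trace = 1

/-- A subnormalized quantum state: positive semidefinite with trace at most one. -/
def IsSubState (ρ : Matrix n n ℂ) : Prop := ρ.PosSemidef ∧ (ρ.trace).re ≤ 1

/-- Loewner (semidefinite) order: `A ≤ B` iff `B - A` is positive semidefinite. -/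
def LoewnerLE (A B : Matrix n n ℂ) : Prop := (B - A).PosSemidef

/-- Fidelity `F(ρ,σ) = ‖√ρ√σ‖₁` (extended to positive operators). -/
def fid (ρ σ : Matrix n n ℂ) : ℝ := trNorm (msqrt ρ * msqrt σ)

/-- Generalized fidelity for subnormalized states. -/
def gFid (ρ σ : Matrix n n ℂ) : ℝ :=
  fid ρ σ + Real.sqrt ((1 - ρ.trace.re) * (1 - σ.trace.re))

/-- (Generalized) purified distance `P(ρ,σ) = sqrt(1 - F(ρ,σ)²)`. -/
def pDist (ρ σ : Matrix n n ℂ) : ℝ := Real.sqrt (1 - (gFid ρ σ)^2)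

/-- Generalized trace distance `δ(ρ,σ) = (‖ρ-σ‖₁ + |Tr(ρ-σ)|)/2` for subnormalized states. -/
def trDist (ρ σ : Matrix n n ℂ) : ℝ :=
  (trNorm (ρ - σ) + |(ρ.trace - σ.trace).re|) / 2

variable {α β γ : Type*} [Fintype α] [DecidableEq α] [Fintype β] [DecidableEq β]
  [Fintype γ] [DecidableEq γ]

/-- Partial trace over the second tensor factor. -/
def ptrSnd (ρ : Matrix (α × β) (α × β) ℂ) : Matrix α α ℂ :=
  fun i j => ∑ k, ρ (i, k) (j, k)

/-- Partial trace over the first tensor factor. -/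
def ptrFst (ρ : Matrix (α × β) (α × β) ℂ) : Matrix β β ℂ :=
  fun i j => ∑ k, ρ (k, i) (k, j)

/-- Partial trace over the middle factor of a tripartite system `(α × β) × γ`. -/
def ptrMid (ρ : Matrix ((α × β) × γ) ((α × β) × γ) ℂ) : Matrix (α × γ) (α × γ) ℂ :=
  fun p q => ∑ m, ρ ((p.1, m), p.2) ((q.1, m), q.2)

/-- Max-relative entropy `D_max(ρ‖σ) = inf {λ : ρ ≤ 2^λ σ}`. -/
def Dmax (ρ σ : Matrix n n ℂ) : ℝ :=
  sInf {l : ℝ | LoewnerLE ρ (((2:ℝ) ^ l) • σ)}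

open Classical in
/-- von Neumann entropy (base 2) of a matrix (0 if not Hermitian). -/
def vnEntropy (ρ : Matrix n n ℂ) : ℝ :=
  if h : ρ.IsHermitian then -∑ i, (h.eigenvalues i) * Real.logb 2 (h.eigenvalues i) else 0

open Classical in
/-- The spectrum of a matrix sorted in decreasing order (0 if not Hermitian). -/
def sortedSpecDesc {d : ℕ} (ρ : Matrix (Fin d) (Fin d) ℂ) : Fin d → ℝ :=
  if h : ρ.IsHermitian then (fun i => (h.eigenvalues ∘ Tuple.sort h.eigenvalues) i.rev)
  else 0


section Aux
variable {n' : Type*} [Fintype n'] [DecidableEq n']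

open scoped MatrixOrder in
lemma Matrix.PosSemidef.eq_sqrt_of_sq_eq {A B : Matrix n n ℂ} (hA : A.PosSemidef)
    (hB : B.PosSemidef) (h : A ^ 2 = B) : A = hB.sqrt := by
  have h1 : CFC.sqrt B = A := CFC.sqrt_unique (by rw [← sq]; exact h) hA.nonneg
  rw [← h1, CFC.sqrt_eq_cfc, cfc_nnreal_eq_real _ B, hB.1.cfc_eq]
  simp only [IsHermitian.cfc, Matrix.PosSemidef.sqrt, Unitary.conjStarAlgAut_apply]
  congr 3
  funext i
  simp [max_eq_left (hB.eigenvalues_nonneg i)]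

lemma term_re (z : ℂ) (r : ℝ) : (star z * ((r : ℂ) * z)).re = r * Complex.normSq z := by
  have : star z * ((r : ℂ) * z) = (r : ℂ) * (Complex.normSq z : ℂ) := by
    rw [Complex.star_def, Complex.normSq_eq_conj_mul_self]; ring
  rw [this, ← Complex.ofReal_mul, Complex.ofReal_re]

lemma sq_re (z : ℂ) : (star z * z).re = Complex.normSq z := by
  rw [Complex.star_def, ← Complex.normSq_eq_conj_mul_self, Complex.ofReal_re]

/-- Quadratic form in eigenvector coordinates. -/
lemma quad_eq {A : Matrix n n ℂ} (hA : A.IsHermitian) (x : n → ℂ) :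
    (star x ⬝ᵥ (A *ᵥ x)).re
      = ∑ j, hA.eigenvalues j *
          Complex.normSq ((star (hA.eigenvectorUnitary : Matrix n n ℂ) *ᵥ x) j) := by
  set U : Matrix n n ℂ := (hA.eigenvectorUnitary : Matrix n n ℂ) with hU
  set y := star U *ᵥ x with hy
  have h1 : star x ᵥ* U = star y := by
    rw [hy, star_mulVec, star_eq_conjTranspose, conjTranspose_conjTranspose]
  calc (star x ⬝ᵥ (A *ᵥ x)).re
      = (star y ⬝ᵥ (diagonal (RCLike.ofReal ∘ hA.eigenvalues) *ᵥ y)).re := by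
        conv_lhs => rw [hA.spectral_theorem, Unitary.conjStarAlgAut_apply]
        rw [← hU, ← mulVec_mulVec, ← mulVec_mulVec, dotProduct_mulVec, h1, ← hy]
    _ = ∑ j, hA.eigenvalues j * Complex.normSq (y j) := by
        rw [dotProduct, Complex.re_sum]
        refine Finset.sum_congr rfl fun j _ => ?_
        rw [mulVec_diagonal, Pi.star_apply]
        exact term_re (y j) (hA.eigenvalues j)

lemma norm_eq {A : Matrix n n ℂ} (hA : A.IsHermitian) (x : n → ℂ) :
    (star x ⬝ᵥ x).re
      = ∑ j, Complex.normSq ((star (hA.eigenvectorUnitary : Matrix n n ℂ) *ᵥ x) j) := by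
  set U : Matrix n n ℂ := (hA.eigenvectorUnitary : Matrix n n ℂ) with hU
  set y := star U *ᵥ x with hy
  have h1 : star x ᵥ* U = star y := by
    rw [hy, star_mulVec, star_eq_conjTranspose, conjTranspose_conjTranspose]
  have h3 : star x ⬝ᵥ x = star y ⬝ᵥ y := by
    calc star x ⬝ᵥ x = star x ⬝ᵥ ((U * star U) *ᵥ x) := by
          rw [(mem_unitaryGroup_iff).mp hA.eigenvectorUnitary.2, one_mulVec]
      _ = (star x ᵥ* U) ⬝ᵥ (star U *ᵥ x) := by rw [← mulVec_mulVec, dotProduct_mulVec]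
      _ = star y ⬝ᵥ y := by rw [h1, hy]
  rw [h3, dotProduct, Complex.re_sum]
  exact Finset.sum_congr rfl fun j _ => sq_re (y j)

/-- Coordinate subspace spanned by standard basis vectors indexed by `J`. -/
def coordSub (J : Finset n) : Submodule ℂ (n → ℂ) :=
  Submodule.span ℂ ((fun j => Pi.single j (1:ℂ)) '' (J : Set n))

lemma coordSub_apply_eq_zero {J : Finset n} {x : n → ℂ} (hx : x ∈ coordSub J)
    {j : n} (hj : j ∉ J) : x j = 0 := by
  have hle : coordSub J ≤ LinearMap.ker (LinearMap.proj (R := ℂ) (φ := fun _ : n => ℂ) j) := by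
    rw [coordSub, Submodule.span_le]
    rintro _ ⟨i, hi, rfl⟩
    simp only [SetLike.mem_coe, LinearMap.mem_ker, LinearMap.proj_apply]
    exact Pi.single_eq_of_ne (fun h : j = i => hj (h ▸ hi)) 1
  exact hle hx

lemma finrank_coordSub (J : Finset n) : Module.finrank ℂ (coordSub J) = J.card := by
  have hli : LinearIndependent ℂ ((fun j => Pi.single (j : n) (1:ℂ)) : J → (n → ℂ)) := by
    have h1 : LinearIndependent ℂ ((fun j => Pi.single j (1:ℂ)) : n → (n → ℂ)) := by
      have := (Pi.basisFun ℂ n).linearIndependent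
      simpa only [funext (Pi.basisFun_apply ℂ n)] using this
    exact h1.comp (fun j : J => (j : n)) Subtype.val_injective
  have : (fun j => Pi.single j (1:ℂ)) '' (J : Set n)
      = Set.range (fun j : J => Pi.single (j : n) (1:ℂ)) := by
    exact (Set.image_eq_range _ _)
  rw [coordSub, this, finrank_span_eq_card hli, Fintype.card_coe]

/-- The subspace of vectors whose eigencoordinates (w.r.t. `hA`) are supported on `J`. -/
def eigSub {A : Matrix n n ℂ} (hA : A.IsHermitian) (J : Finset n) : Submodule ℂ (n → ℂ) :=
  Submodule.comap (mulVecLin (star (hA.eigenvectorUnitary : Matrix n n ℂ))) (coordSub J)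

lemma mem_eigSub {A : Matrix n n ℂ} {hA : A.IsHermitian} {J : Finset n} {x : n → ℂ} :
    x ∈ eigSub hA J ↔
      (star (hA.eigenvectorUnitary : Matrix n n ℂ) *ᵥ x) ∈ coordSub J := Iff.rfl

lemma finrank_eigSub {A : Matrix n n ℂ} (hA : A.IsHermitian) (J : Finset n) :
    Module.finrank ℂ (eigSub hA J) = J.card := by
  set U : Matrix n n ℂ := (hA.eigenvectorUnitary : Matrix n n ℂ) with hU
  have h1 : U * star U = 1 := (mem_unitaryGroup_iff).mp hA.eigenvectorUnitary.2
  have h2 : star U * U = 1 := (mem_unitaryGroup_iff').mp hA.eigenvectorUnitary.2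
  let e : (n → ℂ) ≃ₗ[ℂ] (n → ℂ) :=
    LinearEquiv.ofLinear (mulVecLin (star U)) (mulVecLin U)
      (by rw [← mulVecLin_mul, h2, mulVecLin_one])
      (by rw [← mulVecLin_mul, h1, mulVecLin_one])
  have : eigSub hA J = Submodule.comap (e : (n → ℂ) →ₗ[ℂ] (n → ℂ)) (coordSub J) := rfl
  rw [this, Submodule.comap_equiv_eq_map_symm, LinearEquiv.finrank_map_eq, finrank_coordSub]

lemma dot_self_re_pos {x : n → ℂ} (hx : x ≠ 0) : 0 < (star x ⬝ᵥ x).re := by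
  have h : (star x ⬝ᵥ x).re = ∑ j, Complex.normSq (x j) := by
    rw [dotProduct, Complex.re_sum]
    exact Finset.sum_congr rfl fun j _ => sq_re (x j)
  rw [h]
  obtain ⟨j, hj⟩ := Function.ne_iff.mp hx
  exact Finset.sum_pos' (fun i _ => Complex.normSq_nonneg _)
    ⟨j, Finset.mem_univ j, Complex.normSq_pos.mpr hj⟩

/-- **Weyl monotonicity**: the sorted eigenvalues are monotone in the Loewner order. -/
lemma weyl_mono {d : ℕ} {A B : Matrix (Fin d) (Fin d) ℂ} (hA : A.IsHermitian)
    (hB : B.IsHermitian) (hAB : (B - A).PosSemidef) (k : Fin d) :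
    (hA.eigenvalues ∘ Tuple.sort hA.eigenvalues) k
      ≤ (hB.eigenvalues ∘ Tuple.sort hB.eigenvalues) k := by
  set πA := Tuple.sort hA.eigenvalues
  set πB := Tuple.sort hB.eigenvalues
  set a := hA.eigenvalues ∘ ⇑πA with ha
  set b := hB.eigenvalues ∘ ⇑πB with hb
  set JA := (Finset.Ici k).image πA with hJA
  set JB := (Finset.Iic k).image πB with hJB
  have hcardA : JA.card = d - k := by
    rw [hJA, Finset.card_image_of_injective _ (Equiv.injective _), Fin.card_Ici]
  have hcardB : JB.card = (k : ℕ) + 1 := by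
    rw [hJB, Finset.card_image_of_injective _ (Equiv.injective _), Fin.card_Iic]
  set VA := eigSub hA JA
  set VB := eigSub hB JB
  -- the intersection is nontrivial
  have hpos : 0 < Module.finrank ℂ (VA ⊓ VB : Submodule ℂ (Fin d → ℂ)) := by
    have hsum := Submodule.finrank_sup_add_finrank_inf_eq VA VB
    have hle : Module.finrank ℂ (VA ⊔ VB : Submodule ℂ (Fin d → ℂ)) ≤ d := by
      have := Submodule.finrank_le (VA ⊔ VB)
      simpa [Module.finrank_pi] using this
    have h1 : Module.finrank ℂ VA = d - k := by
      rw [show VA = eigSub hA JA from rfl, finrank_eigSub, hcardA]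
    have h2 : Module.finrank ℂ VB = (k : ℕ) + 1 := by
      rw [show VB = eigSub hB JB from rfl, finrank_eigSub, hcardB]
    have hk := k.isLt
    omega
  have hne : (VA ⊓ VB : Submodule ℂ (Fin d → ℂ)) ≠ ⊥ := by
    intro h
    rw [h] at hpos
    simp at hpos
  obtain ⟨x, hx, hx0⟩ := Submodule.ne_bot_iff _ |>.mp hne
  have hxA : x ∈ VA := hx.1
  have hxB : x ∈ VB := hx.2
  set N := (star x ⬝ᵥ x).re with hN
  have hNpos : 0 < N := dot_self_re_pos hx0
  -- lower bound for the A-form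
  have hA1 : a k * N ≤ (star x ⬝ᵥ (A *ᵥ x)).re := by
    rw [quad_eq hA x, hN, norm_eq hA x, Finset.mul_sum]
    refine Finset.sum_le_sum fun j _ => ?_
    by_cases hj : j ∈ JA
    · obtain ⟨j', hj', rfl⟩ := Finset.mem_image.mp hj
      have : a k ≤ hA.eigenvalues (πA j') :=
        Tuple.monotone_sort hA.eigenvalues (Finset.mem_Ici.mp hj')
      exact mul_le_mul_of_nonneg_right this (Complex.normSq_nonneg _)
    · rw [coordSub_apply_eq_zero (mem_eigSub.mp hxA) hj]
      simp
  -- upper bound for the B-form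
  have hB1 : (star x ⬝ᵥ (B *ᵥ x)).re ≤ b k * N := by
    rw [quad_eq hB x, hN, norm_eq hB x, Finset.mul_sum]
    refine Finset.sum_le_sum fun j _ => ?_
    by_cases hj : j ∈ JB
    · obtain ⟨j', hj', rfl⟩ := Finset.mem_image.mp hj
      have : hB.eigenvalues (πB j') ≤ b k :=
        Tuple.monotone_sort hB.eigenvalues (Finset.mem_Iic.mp hj')
      exact mul_le_mul_of_nonneg_right this (Complex.normSq_nonneg _)
    · rw [coordSub_apply_eq_zero (mem_eigSub.mp hxB) hj]
      simp
  -- the middle inequality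
  have hmid : (star x ⬝ᵥ (A *ᵥ x)).re ≤ (star x ⬝ᵥ (B *ᵥ x)).re := by
    have h0 := hAB.dotProduct_mulVec_nonneg x
    rw [sub_mulVec, dotProduct_sub] at h0
    have := (Complex.le_def.mp h0).1
    simp only [Complex.zero_re, Complex.sub_re] at this
    linarith
  exact le_of_mul_le_mul_right (by linarith) hNpos

lemma trace_conj_diag {U : Matrix n n ℂ} (hU : star U * U = 1) (f : n → ℂ) :
    (U * diagonal f * star U).trace = ∑ j, f j := by
  rw [trace_mul_cycle, hU, one_mul, trace_diagonal]

lemma conj_diag_posSemidef {U : Matrix n n ℂ} {f : n → ℝ} (hf : ∀ j, 0 ≤ f j) :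
    (U * diagonal ((↑) ∘ f : n → ℂ) * star U).PosSemidef := by
  have hd : (diagonal ((↑) ∘ f : n → ℂ)).PosSemidef :=
    posSemidef_diagonal_iff.mpr fun i => by
      simpa using Complex.zero_le_real.mpr (hf i)
  rw [star_eq_conjTranspose]
  exact hd.mul_mul_conjTranspose_same U

lemma conj_diag_mul {U : Matrix n n ℂ} (hU : star U * U = 1) (f g : n → ℂ) :
    (U * diagonal f * star U) * (U * diagonal g * star U)
      = U * diagonal (f * g) * star U := by
  have h1 : U * diagonal f * star U * (U * diagonal g * star U)
      = U * diagonal f * (star U * U) * (diagonal g * star U) := by noncomm_ring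
  have h2 : U * diagonal f * (diagonal g * star U)
      = U * (diagonal f * diagonal g) * star U := by noncomm_ring
  rw [h1, hU, mul_one, h2, diagonal_mul_diagonal]
  rfl

/-- The trace norm of a Hermitian matrix is the sum of the absolute values of eigenvalues. -/
lemma trNorm_eq_sum_abs {A : Matrix n n ℂ} (hA : A.IsHermitian) :
    ((Matrix.posSemidef_conjTranspose_mul_self A).sqrt.trace).re = ∑ j, |hA.eigenvalues j| := by
  set U : Matrix n n ℂ := (hA.eigenvectorUnitary : Matrix n n ℂ) with hUdef
  have hU : star U * U = 1 := (mem_unitaryGroup_iff').mp hA.eigenvectorUnitary.2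
  set S := U * diagonal ((↑) ∘ (fun j => |hA.eigenvalues j|) : n → ℂ) * star U with hS
  have hSpsd : S.PosSemidef := conj_diag_posSemidef fun j => abs_nonneg _
  have hsq : S ^ 2 = Aᴴ * A := by
    rw [pow_two, hS, conj_diag_mul hU, hA.eq]
    conv_rhs => rw [hA.spectral_theorem, Unitary.conjStarAlgAut_apply]
    rw [show ((hA.eigenvectorUnitary : Matrix n n ℂ)
        * diagonal (RCLike.ofReal ∘ hA.eigenvalues) * star (hA.eigenvectorUnitary : Matrix n n ℂ))
        = U * diagonal (RCLike.ofReal ∘ hA.eigenvalues) * star U from rfl,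
      conj_diag_mul hU]
    congr 2
    funext j j'
    simp only [diagonal_apply, Pi.mul_apply, Function.comp_apply]
    split_ifs with h
    · have := abs_mul_abs_self (hA.eigenvalues j)
      norm_cast
      rw [this]
      try rfl
    · rfl
  have := hSpsd.eq_sqrt_of_sq_eq (Matrix.posSemidef_conjTranspose_mul_self A) hsq
  rw [← this, hS, trace_conj_diag hU, Complex.re_sum]
  simp

/-- Sum of sorted spectrum equals the real trace. -/
lemma sum_sortedSpecDesc_eq {A : Matrix n n ℂ} (hA : A.IsHermitian) :
    ∑ j, hA.eigenvalues j = A.trace.re := by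
  have ht : A.trace = ∑ j, (hA.eigenvalues j : ℂ) := by
    conv_lhs => rw [hA.spectral_theorem, Unitary.conjStarAlgAut_apply]
    rw [trace_conj_diag ((mem_unitaryGroup_iff').mp hA.eigenvectorUnitary.2)]
    rfl
  rw [ht, Complex.re_sum]
  simp

lemma sortedSpecDesc_mono {d : ℕ} {A B : Matrix (Fin d) (Fin d) ℂ} (hA : A.IsHermitian)
    (hB : B.IsHermitian) (hAB : (B - A).PosSemidef) (i : Fin d) :
    sortedSpecDesc A i ≤ sortedSpecDesc B i := by
  unfold sortedSpecDesc
  rw [dif_pos hA, dif_pos hB]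
  exact weyl_mono hA hB hAB i.rev

lemma sum_sortedSpecDesc {d : ℕ} {A : Matrix (Fin d) (Fin d) ℂ} (hA : A.IsHermitian) :
    ∑ i, sortedSpecDesc A i = A.trace.re := by
  unfold sortedSpecDesc
  rw [dif_pos hA]
  rw [show (fun i : Fin d => (hA.eigenvalues ∘ ⇑(Tuple.sort hA.eigenvalues)) i.rev)
      = fun i : Fin d => (hA.eigenvalues ∘ ⇑(Tuple.sort hA.eigenvalues)) (Fin.revPerm i) from rfl]
  rw [Equiv.sum_comp Fin.revPerm (hA.eigenvalues ∘ ⇑(Tuple.sort hA.eigenvalues))]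
  rw [show (fun i : Fin d => (hA.eigenvalues ∘ ⇑(Tuple.sort hA.eigenvalues)) i)
      = fun i : Fin d => hA.eigenvalues ((Tuple.sort hA.eigenvalues) i) from rfl,
    Equiv.sum_comp (Tuple.sort hA.eigenvalues) hA.eigenvalues]
  exact sum_sortedSpecDesc_eq hA

end Aux

/-- The trace distance between two density matrices is at least the
trace distance between their ordered eigenvalue spectra. -/
theorem trDist_ge_trDist_spectra {d : ℕ}
    (ρ σ : Matrix (Fin d) (Fin d) ℂ) (hρ : IsState ρ) (hσ : IsState σ) :
    (1/2 : ℝ) * trNorm (ρ - σ) ≥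
      (1/2 : ℝ) * ∑ i, |sortedSpecDesc ρ i - sortedSpecDesc σ i| := by
  have hρh : ρ.IsHermitian := hρ.1.1
  have hσh : σ.IsHermitian := hσ.1.1
  have hΔ : (ρ - σ).IsHermitian := hρh.sub hσh
  set U : Matrix (Fin d) (Fin d) ℂ := (hΔ.eigenvectorUnitary : Matrix (Fin d) (Fin d) ℂ) with hUdef
  have hU : star U * U = 1 := (mem_unitaryGroup_iff').mp hΔ.eigenvectorUnitary.2
  set μ := hΔ.eigenvalues with hμ
  set P := U * diagonal ((↑) ∘ (fun j => max (μ j) 0) : Fin d → ℂ) * star U with hPdef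
  set Q := U * diagonal ((↑) ∘ (fun j => max (-(μ j)) 0) : Fin d → ℂ) * star U with hQdef
  have hPpsd : P.PosSemidef := conj_diag_posSemidef fun j => le_max_right _ _
  have hQpsd : Q.PosSemidef := conj_diag_posSemidef fun j => le_max_right _ _
  have hPQ : P - Q = ρ - σ := by
    rw [hPdef, hQdef, ← sub_mul, ← mul_sub, diagonal_sub]
    have hfg : (fun i => ((↑) ∘ (fun j => max (μ j) 0) : Fin d → ℂ) i
        - ((↑) ∘ (fun j => max (-(μ j)) 0) : Fin d → ℂ) i)
        = (RCLike.ofReal ∘ μ : Fin d → ℂ) := by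
      funext i
      simp only [Function.comp_apply]
      rw [← Complex.ofReal_sub, max_zero_sub_max_neg_zero_eq_self]
      rfl
    rw [hfg]
    exact (hΔ.spectral_theorem).symm
  have htrP : P.trace.re = ∑ j, max (μ j) 0 := by
    rw [hPdef, trace_conj_diag hU, Complex.re_sum]
    simp
  have htrQ : Q.trace.re = ∑ j, max (-(μ j)) 0 := by
    rw [hQdef, trace_conj_diag hU, Complex.re_sum]
    simp
  have htrNorm : trNorm (ρ - σ) = ∑ j, |μ j| := by
    unfold trNorm
    exact trNorm_eq_sum_abs hΔ
  have hτ : (σ + P).IsHermitian := hσh.add hPpsd.1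
  have hκ : (ρ + Q).IsHermitian := hρh.add hQpsd.1
  have e1 : σ + P - ρ = Q := by
    rw [show Q = P - (ρ - σ) from by rw [← hPQ]; abel]
    abel
  have e2 : σ + P - σ = P := by abel
  have e3 : ρ + Q - σ = P := by
    rw [show P = Q + (ρ - σ) from by rw [← hPQ]; abel]
    abel
  have e4 : ρ + Q - ρ = Q := by abel
  have h1 : ∀ i, sortedSpecDesc ρ i ≤ sortedSpecDesc (σ + P) i :=
    fun i => sortedSpecDesc_mono hρh hτ (by rw [e1]; exact hQpsd) i
  have h2 : ∀ i, sortedSpecDesc σ i ≤ sortedSpecDesc (σ + P) i :=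
    fun i => sortedSpecDesc_mono hσh hτ (by rw [e2]; exact hPpsd) i
  have h3 : ∀ i, sortedSpecDesc σ i ≤ sortedSpecDesc (ρ + Q) i :=
    fun i => sortedSpecDesc_mono hσh hκ (by rw [e3]; exact hPpsd) i
  have h4 : ∀ i, sortedSpecDesc ρ i ≤ sortedSpecDesc (ρ + Q) i :=
    fun i => sortedSpecDesc_mono hρh hκ (by rw [e4]; exact hQpsd) i
  have key : ∑ i, |sortedSpecDesc ρ i - sortedSpecDesc σ i|
      ≤ ∑ i, ((sortedSpecDesc (σ + P) i - sortedSpecDesc σ i)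
          + (sortedSpecDesc (ρ + Q) i - sortedSpecDesc ρ i)) := by
    refine Finset.sum_le_sum fun i _ => abs_le.mpr ⟨?_, ?_⟩
    · have := h1 i; have := h2 i; have := h3 i; have := h4 i; linarith
    · have := h1 i; have := h2 i; have := h3 i; have := h4 i; linarith
  have hsplit : ∑ i, ((sortedSpecDesc (σ + P) i - sortedSpecDesc σ i)
      + (sortedSpecDesc (ρ + Q) i - sortedSpecDesc ρ i)) = P.trace.re + Q.trace.re := by
    rw [Finset.sum_add_distrib, Finset.sum_sub_distrib, Finset.sum_sub_distrib,
      sum_sortedSpecDesc hτ, sum_sortedSpecDesc hσh, sum_sortedSpecDesc hκ,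
      sum_sortedSpecDesc hρh, trace_add, trace_add, Complex.add_re, Complex.add_re]
    ring
  have hfin : P.trace.re + Q.trace.re = trNorm (ρ - σ) := by
    rw [htrP, htrQ, htrNorm, ← Finset.sum_add_distrib]
    exact Finset.sum_congr rfl fun j _ => max_zero_add_max_neg_zero_eq_abs_self _
  linarith [key, hsplit, hfin]
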